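/- Let D ⊆ ℂ be open and D₀ ⊆ D closed and discrete. If f is a complex Nash function on D \ D₀ (holomorphic and, on each connected component, satisfying a nonzero polynomial identity P(z, f(z)) = 0), then f extends to a meromorphic function on D having only finitely many poles in each connected component of D. -/

import Mathlib

open Filter Topology

open Metric Set Polynomial


lemma punctured_ball_preconnected (c : ℂ) (r : ℝ) :
    IsPreconnected (Metric.ball c r \ {c}) := by
  rcases le_or_gt r 0 with hr | hr
  · rw [Metric.ball_eq_empty.2 hr, Set.empty_diff]; exact isPreconnected_empty
  have hsph : IsPreconnected (Metric.sphere c (r/2)) :=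
    isPreconnected_sphere (Complex.rank_real_complex ▸ Nat.one_lt_ofNat) c (r/2)
  set L : ℂ → Set ℂ := fun u => (fun t : ℝ => c + t * u) '' Set.Ioo 0 r with hL
  have hLpre : ∀ u : ℂ, IsPreconnected (L u) := fun u =>
    (isPreconnected_Ioo).image _ (Continuous.continuousOn (by continuity))
  have hLsub : ∀ u : ℂ, ‖u‖ = 1 → L u ⊆ Metric.ball c r \ {c} := by
    rintro u hu _ ⟨t, ⟨ht0, htr⟩, rfl⟩
    constructor
    · simp only [Metric.mem_ball, dist_eq_norm, add_sub_cancel_left, norm_mul, hu, mul_one,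
        Complex.norm_real, Real.norm_eq_abs, abs_of_pos ht0]
      exact htr
    · simp only [Set.mem_singleton_iff, add_eq_left]
      intro h
      rcases mul_eq_zero.1 h with h' | h'
      · exact absurd (by exact_mod_cast h') ht0.ne'
      · simp [h'] at hu
  have hmem : ∀ u : ℂ, ‖u‖ = 1 → c + ((r/2 : ℝ) : ℂ) * u ∈ L u ∩ Metric.sphere c (r/2) := by
    intro u hu
    refine ⟨⟨r/2, ⟨by linarith, by linarith⟩, rfl⟩, ?_⟩
    simp only [Metric.mem_sphere, dist_eq_norm, add_sub_cancel_left, norm_mul, hu, mul_one,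
      Complex.norm_real, Real.norm_eq_abs]
    rw [abs_of_pos (by linarith : (0:ℝ) < r/2)]
  have key : ∀ a ∈ Metric.ball c r \ {c}, ∃ u : ℂ, ‖u‖ = 1 ∧ a ∈ L u := by
    rintro a ⟨ha, ha'⟩
    have hne : a - c ≠ 0 := sub_ne_zero.2 (by simpa using ha')
    have hnorm : ‖a - c‖ ≠ 0 := norm_ne_zero_iff.2 hne
    refine ⟨(a - c) / ‖a - c‖, ?_, ⟨‖a - c‖, ⟨by positivity, ?_⟩, ?_⟩⟩
    · rw [norm_div]; simp only [Complex.norm_real, Real.norm_eq_abs, abs_norm]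
      exact div_self hnorm
    · have := lt_of_le_of_ne (norm_nonneg (a - c)) (Ne.symm hnorm)
      simpa [dist_eq_norm] using ha
    · show c + (‖a - c‖ : ℂ) * ((a - c) / (‖a - c‖ : ℂ)) = a
      have : ((‖a - c‖ : ℝ) : ℂ) ≠ 0 := by exact_mod_cast hnorm
      have h3 : (‖a - c‖ : ℂ) * ((a - c) / (‖a - c‖ : ℂ)) = a - c := by
        rw [mul_comm]
        exact div_mul_cancel₀ _ this
      rw [h3]
      ring
  set p : ℂ := c + ((r/2 : ℝ) : ℂ) with hpdef
  have hp : p ∈ Metric.sphere c (r/2) := by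
    simp only [hpdef, Metric.mem_sphere, dist_eq_norm, add_sub_cancel_left, Complex.norm_real,
      Real.norm_eq_abs]
    rw [abs_of_pos (by linarith : (0:ℝ) < r/2)]
  apply isPreconnected_of_forall p
  intro y hy
  rcases key y hy with ⟨u, hu, hyu⟩
  have h1 := hLpre u
  have h2 := hmem u hu
  have hsub2 : Metric.sphere c (r/2) ⊆ Metric.ball c r \ {c} := by
    intro x hx
    rw [mem_sphere_iff_norm] at hx
    constructor
    · rw [Metric.mem_ball, dist_eq_norm, hx]; linarith
    · simp only [Set.mem_singleton_iff]
      intro h; rw [h] at hx; simp at hx; linarith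
  exact ⟨L u ∪ Metric.sphere c (r/2), Set.union_subset (hLsub u hu) hsub2,
    Or.inr hp, Or.inl hyu, IsPreconnected.union _ h2.1 h2.2 h1 hsph⟩


lemma diff_discrete_preconnected {C T : Set ℂ} (hC : IsOpen C) (hconn : IsPreconnected C)
    (hcl : ∀ z ∈ C, z ∈ closure T → z ∈ T)
    (hd : ∀ z ∈ T, ∃ U : Set ℂ, IsOpen U ∧ z ∈ U ∧ U ∩ T = {z}) :
    IsPreconnected (C \ T) := by
  rcases (C \ T).eq_empty_or_nonempty with h | ⟨x, hx⟩
  · rw [h]; exact isPreconnected_empty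
  have hΩopen : IsOpen (C \ T) := by
    have : C \ T = C ∩ (closure T)ᶜ := by
      ext z
      constructor
      · rintro ⟨hz, hz'⟩
        exact ⟨hz, fun hc => hz' (hcl z hz hc)⟩
      · rintro ⟨hz, hz'⟩
        exact ⟨hz, fun hc => hz' (subset_closure hc)⟩
    rw [this]
    exact hC.inter isClosed_closure.isOpen_compl
  set V := connectedComponentIn (C \ T) x with hV
  have hVopen : IsOpen V := hΩopen.connectedComponentIn
  have hVsub : V ⊆ C \ T := connectedComponentIn_subset _ _
  have hxV : x ∈ V := mem_connectedComponentIn hx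
  have hVpre : IsPreconnected V := isPreconnected_connectedComponentIn
  -- step A
  have stepA : ∀ t ∈ T ∩ C, t ∈ closure V → ∃ r > 0, Metric.ball t r ⊆ V ∪ {t} := by
    rintro t ⟨htT, htC⟩ htcl
    obtain ⟨U, hUopen, htU, hUT⟩ := hd t htT
    obtain ⟨r, hr, hball⟩ := Metric.isOpen_iff.1 (hC.inter hUopen) t ⟨htC, htU⟩
    have hball' : Metric.ball t r \ {t} ⊆ C \ T := by
      rintro z ⟨hz, hz'⟩
      refine ⟨(hball hz).1, fun hzT => hz' ?_⟩
      have : z ∈ U ∩ T := ⟨(hball hz).2, hzT⟩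
      rw [hUT] at this
      exact this
    obtain ⟨v, hvball, hvV⟩ := mem_closure_iff.1 htcl (Metric.ball t r) Metric.isOpen_ball
      (Metric.mem_ball_self hr)
    have hvne : v ≠ t := fun h => (hVsub hvV).2 (h ▸ htT)
    have hunion : IsPreconnected (Metric.ball t r \ {t} ∪ V) :=
      IsPreconnected.union v ⟨hvball, hvne⟩ hvV (punctured_ball_preconnected t r) hVpre
    have hsub : Metric.ball t r \ {t} ∪ V ⊆ C \ T := Set.union_subset hball' hVsub
    have : Metric.ball t r \ {t} ∪ V ⊆ V :=
      hunion.subset_connectedComponentIn (Or.inr hxV) hsub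
    refine ⟨r, hr, fun z hz => ?_⟩
    by_cases hzt : z = t
    · exact Or.inr (by simp [hzt])
    · exact Or.inl (this (Or.inl ⟨hz, hzt⟩))
  set u := V ∪ (T ∩ C ∩ closure V) with hu
  have husub : u ⊆ C := Set.union_subset (fun z hz => (hVsub hz).1) (fun z hz => hz.1.2)
  have huopen : IsOpen u := by
    rw [isOpen_iff_mem_nhds]
    rintro y (hyV | hyTC)
    · exact Filter.mem_of_superset (hVopen.mem_nhds hyV) Set.subset_union_left
    · obtain ⟨r, hr, hball⟩ := stepA y hyTC.1 hyTC.2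
      refine Filter.mem_of_superset (Metric.ball_mem_nhds y hr) ?_
      refine hball.trans (Set.union_subset Set.subset_union_left ?_)
      rintro z rfl
      exact Or.inr hyTC
  have stepB : ∀ c ∈ C, c ∈ closure u → c ∈ u := by
    intro c hcC hccl
    by_cases hcT : c ∈ T
    · right
      refine ⟨⟨hcT, hcC⟩, ?_⟩
      rw [_root_.mem_closure_iff]
      intro O hO hcO
      obtain ⟨U, hUopen, hcU, hUT⟩ := hd c hcT
      obtain ⟨y, ⟨hyO, hyU⟩, hyu⟩ := mem_closure_iff.1 hccl (O ∩ U) (hO.inter hUopen) ⟨hcO, hcU⟩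
      rcases hyu with hyV | hyTC
      · exact ⟨y, hyO, hyV⟩
      · have : y ∈ U ∩ T := ⟨hyU, hyTC.1.1⟩
        rw [hUT] at this
        rw [this] at hyTC
        exact mem_closure_iff.1 hyTC.2 O hO hcO
    · left
      have hcΩ : c ∈ C \ T := ⟨hcC, hcT⟩
      obtain ⟨r, hr, hball⟩ := Metric.isOpen_iff.1 hΩopen c hcΩ
      obtain ⟨y, hyball, hyu⟩ := mem_closure_iff.1 hccl (Metric.ball c r) Metric.isOpen_ball
        (Metric.mem_ball_self hr)
      have hyV : y ∈ V := by
        rcases hyu with h | h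
        · exact h
        · exact absurd h.1.1 (hball hyball).2
      have hunion : IsPreconnected (Metric.ball c r ∪ V) :=
        IsPreconnected.union y hyball hyV (convex_ball c r).isPreconnected hVpre
      have : Metric.ball c r ∪ V ⊆ V :=
        hunion.subset_connectedComponentIn (Or.inr hxV) (Set.union_subset hball hVsub)
      exact this (Or.inl (Metric.mem_ball_self hr))
  -- conclude C ⊆ u
  have hCu : C ⊆ u := by
    by_contra hnot
    rw [Set.not_subset] at hnot
    obtain ⟨c, hcC, hcu⟩ := hnot
    have hcv : c ∈ (closure u)ᶜ := fun hc => hcu (stepB c hcC hc)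
    have hcover : C ⊆ u ∪ (closure u)ᶜ := by
      intro z hz
      by_cases hzu : z ∈ closure u
      · exact Or.inl (stepB z hz hzu)
      · exact Or.inr hzu
    obtain ⟨w, _, hw1, hw2⟩ := hconn u (closure u)ᶜ huopen isClosed_closure.isOpen_compl hcover
      ⟨x, hx.1, Or.inl hxV⟩ ⟨c, hcC, hcv⟩
    exact hw2 (subset_closure hw1)
  have : C \ T = V := by
    apply Set.Subset.antisymm
    · intro z hz
      rcases hCu hz.1 with h | h
      · exact h
      · exact absurd h.1.1 hz.2
    · exact hVsub
  rw [this]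
  exact hVpre


noncomputable def toPoly2 (P : MvPolynomial (Fin 2) ℂ) : Polynomial (Polynomial ℂ) :=
  MvPolynomial.eval₂ (Polynomial.C.comp Polynomial.C)
    ![Polynomial.C Polynomial.X, Polynomial.X] P

lemma toPoly2_eval (P : MvPolynomial (Fin 2) ℂ) (z w : ℂ) :
    Polynomial.eval w ((toPoly2 P).map (Polynomial.evalRingHom z)) =
      MvPolynomial.eval ![z, w] P := by
  induction P using MvPolynomial.induction_on with
  | C a => simp [toPoly2]
  | add p q hp hq =>
    simp only [toPoly2, MvPolynomial.eval₂_add, Polynomial.map_add, eval_add, map_add] at *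
    rw [hp, hq]
  | mul_X p i hp =>
    simp only [toPoly2, MvPolynomial.eval₂_mul, MvPolynomial.eval₂_X, Polynomial.map_mul,
      eval_mul, map_mul] at *
    rw [hp]
    congr 1
    fin_cases i <;> simp

lemma toPoly2_ne_zero {P : MvPolynomial (Fin 2) ℂ} (hP : P ≠ 0) : toPoly2 P ≠ 0 := by
  intro h
  apply hP
  apply MvPolynomial.funext
  intro x
  have h1 : x = ![x 0, x 1] := by
    funext i
    fin_cases i <;> simp
  rw [h1, ← toPoly2_eval, h]
  simp


lemma root_bound (Q : Polynomial (Polynomial ℂ)) (z x : ℂ)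
    (hroot : Polynomial.eval x (Q.map (Polynomial.evalRingHom z)) = 0) :
    ‖(Q.coeff Q.natDegree).eval z * x‖ ≤
      ∑ i ∈ Finset.range (Q.natDegree + 1), ‖(Q.coeff i).eval z‖ := by
  set d := Q.natDegree with hd
  set p := Q.map (Polynomial.evalRingHom z) with hp
  have hcoeff : ∀ i, p.coeff i = (Q.coeff i).eval z := by
    intro i; simp [hp, Polynomial.coeff_map]
  have hsum_nonneg : (0:ℝ) ≤ ∑ i ∈ Finset.range (d + 1), ‖(Q.coeff i).eval z‖ :=
    Finset.sum_nonneg fun i _ => norm_nonneg _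
  by_cases ha : (Q.coeff d).eval z = 0
  · rw [ha]; simpa using hsum_nonneg
  have hdeg : p.natDegree ≤ d := Polynomial.natDegree_map_le
  have hterm : ‖(Q.coeff d).eval z‖ ≤ ∑ i ∈ Finset.range (d + 1), ‖(Q.coeff i).eval z‖ :=
    Finset.single_le_sum (f := fun i => ‖(Q.coeff i).eval z‖)
      (fun i _ => norm_nonneg _) (Finset.self_mem_range_succ d)
  by_cases hx1 : ‖x‖ ≤ 1
  · calc ‖(Q.coeff d).eval z * x‖ = ‖(Q.coeff d).eval z‖ * ‖x‖ := norm_mul _ _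
      _ ≤ ‖(Q.coeff d).eval z‖ * 1 := by
          exact mul_le_mul_of_nonneg_left hx1 (norm_nonneg _)
      _ ≤ _ := by rw [mul_one]; exact hterm
  push_neg at hx1
  rcases Nat.eq_zero_or_pos d with hd0 | hd1
  · exfalso
    have hpd : p.natDegree = 0 := le_antisymm (hd0 ▸ hdeg) (Nat.zero_le _)
    have : p = Polynomial.C (p.coeff 0) := Polynomial.eq_C_of_natDegree_eq_zero hpd
    rw [this] at hroot
    simp only [Polynomial.eval_C] at hroot
    rw [hcoeff 0, ← hd0] at hroot
    exact ha hroot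
  have heval : p.eval x = ∑ i ∈ Finset.range (d + 1), p.coeff i * x ^ i :=
    Polynomial.eval_eq_sum_range' (lt_of_le_of_lt hdeg (lt_add_one d)) x
  rw [hroot] at heval
  rw [Finset.sum_range_succ] at heval
  have hax : p.coeff d * x ^ d = -∑ i ∈ Finset.range d, p.coeff i * x ^ i := by
    linear_combination -heval
  have hB : ‖p.coeff d‖ * ‖x‖ ^ d ≤
      (∑ i ∈ Finset.range d, ‖p.coeff i‖) * ‖x‖ ^ (d - 1) := by
    calc ‖p.coeff d‖ * ‖x‖ ^ d = ‖p.coeff d * x ^ d‖ := by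
          rw [norm_mul, norm_pow]
      _ = ‖∑ i ∈ Finset.range d, p.coeff i * x ^ i‖ := by rw [hax, norm_neg]
      _ ≤ ∑ i ∈ Finset.range d, ‖p.coeff i * x ^ i‖ := norm_sum_le _ _
      _ ≤ ∑ i ∈ Finset.range d, ‖p.coeff i‖ * ‖x‖ ^ (d - 1) := by
          apply Finset.sum_le_sum
          intro i hi
          rw [norm_mul, norm_pow]
          exact mul_le_mul_of_nonneg_left
            (pow_le_pow_right₀ (le_of_lt hx1) (Nat.le_sub_one_of_lt (Finset.mem_range.1 hi)))
            (norm_nonneg _)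
      _ = _ := by rw [Finset.sum_mul]
  have hpow : ‖x‖ ^ d = ‖x‖ * ‖x‖ ^ (d - 1) := by
    conv_lhs => rw [show d = (d-1) + 1 from (Nat.succ_pred_eq_of_pos hd1).symm]
    rw [pow_succ]
    ring
  have hxpos : (0:ℝ) < ‖x‖ ^ (d - 1) := pow_pos (lt_trans one_pos hx1) _
  have hkey : ‖p.coeff d‖ * ‖x‖ ≤ ∑ i ∈ Finset.range d, ‖p.coeff i‖ := by
    have := hB
    rw [hpow, ← mul_assoc] at this
    exact le_of_mul_le_mul_right this hxpos
  have hfin : ∑ i ∈ Finset.range d, ‖p.coeff i‖ ≤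
      ∑ i ∈ Finset.range (d + 1), ‖(Q.coeff i).eval z‖ := by
    rw [Finset.sum_range_succ]
    simp only [hcoeff]
    exact le_add_of_nonneg_right (norm_nonneg _)
  calc ‖(Q.coeff d).eval z * x‖ = ‖p.coeff d‖ * ‖x‖ := by rw [norm_mul, hcoeff]
    _ ≤ _ := le_trans hkey hfin


lemma mero_dichotomy {f : ℂ → ℂ} {z₀ : ℂ} (h : MeromorphicAt f z₀) :
    (∃ c, Tendsto f (𝓝[≠] z₀) (𝓝 c)) ∨ Tendsto (fun w => ‖f w‖) (𝓝[≠] z₀) atTop := by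
  rcases eq_or_ne (meromorphicOrderAt f z₀) ⊤ with ho | ho
  · left
    have hev : f =ᶠ[𝓝[≠] z₀] (fun _ => 0) := meromorphicOrderAt_eq_top_iff.1 ho
    exact ⟨0, Tendsto.congr' hev.symm tendsto_const_nhds⟩
  obtain ⟨n, hn⟩ := WithTop.ne_top_iff_exists.1 ho
  obtain ⟨g, hg_an, hg_ne, hg_eq⟩ := (meromorphicOrderAt_eq_int_iff h).1 hn.symm
  have hgt : Tendsto g (𝓝[≠] z₀) (𝓝 (g z₀)) :=
    (hg_an.continuousAt.tendsto).mono_left nhdsWithin_le_nhds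
  rcases le_or_gt 0 n with hn0 | hn0
  · left
    refine ⟨(z₀ - z₀) ^ n.toNat * g z₀, ?_⟩
    have h4 : Tendsto (fun z => (z - z₀) ^ n.toNat * g z) (𝓝[≠] z₀)
        (𝓝 ((z₀ - z₀) ^ n.toNat * g z₀)) := by
      apply Tendsto.mul ?_ hgt
      exact ((continuous_id.sub continuous_const).pow _).continuousAt.tendsto.mono_left
        nhdsWithin_le_nhds
    apply Tendsto.congr' ?_ h4
    filter_upwards [hg_eq] with z hz
    rw [hz]
    simp only [smul_eq_mul]
    rw [← zpow_natCast (z - z₀) n.toNat, Int.toNat_of_nonneg hn0]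
  · right
    have hpos : 0 < ‖g z₀‖ := norm_pos_iff.2 hg_ne
    have h1 : Tendsto (fun z : ℂ => ‖z - z₀‖ ^ n) (𝓝[≠] z₀) atTop := by
      have h2 : Tendsto (fun z : ℂ => ‖z - z₀‖) (𝓝[≠] z₀) (𝓝[>] 0) := by
        rw [tendsto_nhdsWithin_iff]
        constructor
        · apply Tendsto.mono_left ?_ nhdsWithin_le_nhds
          have h5 : Continuous (fun z : ℂ => ‖z - z₀‖) := (continuous_id.sub continuous_const).norm
          simpa using h5.tendsto z₀
        · filter_upwards [self_mem_nhdsWithin] with z hz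
          simp only [Set.mem_Ioi, norm_pos_iff]
          simpa [sub_eq_zero] using hz
      have h3 : Tendsto (fun t : ℝ => t ^ n) (𝓝[>] 0) atTop := by
        have h6 : Tendsto (fun t : ℝ => (t⁻¹) ^ (-n).toNat) (𝓝[>] 0) atTop :=
          (tendsto_pow_atTop (by omega : (-n).toNat ≠ 0)).comp tendsto_inv_nhdsGT_zero
        apply Tendsto.congr' ?_ h6
        filter_upwards [self_mem_nhdsWithin] with t ht
        rw [← zpow_natCast (t⁻¹) (-n).toNat, Int.toNat_of_nonneg (by omega), inv_zpow,
          ← zpow_neg, neg_neg]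
      exact h3.comp h2
    have h7 := h1.atTop_mul_pos hpos hgt.norm
    refine Tendsto.congr' ?_ h7
    filter_upwards [hg_eq] with z hz
    rw [hz, smul_eq_mul, norm_mul, norm_zpow]


lemma mero_of_nash {f : ℂ → ℂ} {z₀ : ℂ} {r : ℝ} (hr : 0 < r)
    (hf : DifferentiableOn ℂ f (Metric.ball z₀ r \ {z₀}))
    {Q : Polynomial (Polynomial ℂ)} (hQ : Q ≠ 0)
    (hrel : ∀ w ∈ Metric.ball z₀ r \ {z₀},
      Polynomial.eval (f w) (Q.map (Polynomial.evalRingHom w)) = 0) :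
    MeromorphicAt f z₀ := by
  set a : Polynomial ℂ := Q.coeff Q.natDegree with ha
  have ha0 : a ≠ 0 := by
    rw [ha]
    exact Polynomial.leadingCoeff_ne_zero.2 hQ
  set M : ℂ → ℝ := fun w => ∑ i ∈ Finset.range (Q.natDegree + 1), ‖(Q.coeff i).eval w‖ with hM
  have hMcont : Continuous M := by
    apply continuous_finset_sum
    intro i _
    exact (Polynomial.continuous _).norm
  set F : ℂ → ℂ := fun w => a.eval w * f w with hF
  have hFb : ∀ w ∈ Metric.ball z₀ r \ {z₀}, ‖F w‖ ≤ M w := fun w hw =>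
    root_bound Q w (f w) (hrel w hw)
  -- bound M on the closed ball of radius r/2
  obtain ⟨B, hB⟩ : ∃ B, ∀ w ∈ Metric.closedBall z₀ (r/2), M w ≤ B := by
    obtain ⟨w₀, -, hw₀⟩ := (isCompact_closedBall z₀ (r/2)).exists_isMaxOn
      (Metric.nonempty_closedBall.2 (by linarith)) hMcont.continuousOn
    exact ⟨M w₀, fun w hw => hw₀ hw⟩
  have hsmall : Metric.ball z₀ (r/2) ⊆ Metric.ball z₀ r :=
    Metric.ball_subset_ball (by linarith)
  have hFd : DifferentiableOn ℂ F (Metric.ball z₀ (r/2) \ {z₀}) := by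
    apply DifferentiableOn.mul
    · exact (Polynomial.differentiable a).differentiableOn
    · exact hf.mono (Set.diff_subset_diff_left hsmall)
  have hFbdd : BddAbove (norm ∘ F '' (Metric.ball z₀ (r/2) \ {z₀})) := by
    refine ⟨B, ?_⟩
    rintro x ⟨w, hw, rfl⟩
    calc ‖F w‖ ≤ M w := hFb w ⟨hsmall hw.1, hw.2⟩
      _ ≤ B := hB w (Metric.ball_subset_closedBall hw.1)
  have hup := Complex.differentiableOn_update_limUnder_of_bddAbove
    (Metric.ball_mem_nhds z₀ (by linarith : (0:ℝ) < r/2)) hFd hFbdd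
  have han : AnalyticAt ℂ (Function.update F z₀ (limUnder (𝓝[≠] z₀) F)) z₀ :=
    hup.analyticAt (Metric.ball_mem_nhds z₀ (by linarith))
  have hmF : MeromorphicAt F z₀ := by
    apply han.meromorphicAt.congr
    filter_upwards [self_mem_nhdsWithin] with w hw
    exact (Function.update_of_ne hw _ _)
  have haev : ∀ᶠ w in 𝓝[≠] z₀, a.eval w ≠ 0 := by
    have hfin : ({w : ℂ | a.IsRoot w} \ {z₀}).Finite :=
      (Polynomial.finite_setOf_isRoot ha0).diff
    have hcl : IsClosed ({w : ℂ | a.IsRoot w} \ {z₀}) := hfin.isClosed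
    have hz₀ : z₀ ∉ ({w : ℂ | a.IsRoot w} \ {z₀}) := fun h => h.2 rfl
    have hmem : ({w : ℂ | a.IsRoot w} \ {z₀})ᶜ ∈ 𝓝 z₀ := hcl.isOpen_compl.mem_nhds hz₀
    filter_upwards [mem_nhdsWithin_of_mem_nhds hmem, self_mem_nhdsWithin] with w hw hw'
    intro h
    exact hw ⟨h, hw'⟩
  have hm : MeromorphicAt (fun w => F w / a.eval w) z₀ :=
    hmF.div ((Polynomial.differentiable a).analyticAt z₀).meromorphicAt
  apply hm.congr
  filter_upwards [haev] with w hw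
  rw [hF]
  field_simp

/-- **Complex Nash functions are meromorphic with finitely many poles.** Let `D ⊆ ℂ` be open
and `D₀ ⊆ D` closed in `D` and discrete. If `f` is holomorphic on `D \ D₀` and, on each
connected component of `D \ D₀`, satisfies a nonzero polynomial identity `P(z, f z) = 0`,
then `f` extends to a meromorphic function on `D`: there are a set `S ⊆ D₀`, finite in each
connected component of `D`, and a function `g` holomorphic on `D \ S`, agreeing with `f` on
`D \ D₀`, such that every point of `S` is a pole of `g`. -/
theorem stmt_19 (D : Set ℂ) (hopen : IsOpen D) (D₀ : Set ℂ) (hsub : D₀ ⊆ D)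
    (hclosed : ∀ z ∈ D, z ∈ closure D₀ → z ∈ D₀)
    (hdisc : ∀ z ∈ D₀, ∃ U : Set ℂ, IsOpen U ∧ z ∈ U ∧ U ∩ D₀ = {z})
    (f : ℂ → ℂ) (hf : DifferentiableOn ℂ f (D \ D₀))
    (hNash : ∀ z ∈ D \ D₀, ∃ P : MvPolynomial (Fin 2) ℂ, P ≠ 0 ∧
      ∀ w ∈ connectedComponentIn (D \ D₀) z, MvPolynomial.eval ![w, f w] P = 0) :
    ∃ (S : Set ℂ) (g : ℂ → ℂ), S ⊆ D₀ ∧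
      (∀ z ∈ D, (S ∩ connectedComponentIn D z).Finite) ∧
      DifferentiableOn ℂ g (D \ S) ∧
      (∀ z ∈ D \ D₀, g z = f z) ∧
      ∀ z ∈ S, Tendsto (fun w => ‖g w‖) (𝓝[≠] z) atTop := by

  classical
  -- the set `D \ D₀` is open
  have hΩopen : IsOpen (D \ D₀) := by
    have h : D \ D₀ = D ∩ (closure D₀)ᶜ := by
      ext z
      constructor
      · rintro ⟨hz, hz'⟩
        exact ⟨hz, fun hc => hz' (hclosed z hz hc)⟩
      · rintro ⟨hz, hz'⟩
        exact ⟨hz, fun hc => hz' (subset_closure hc)⟩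
    rw [h]
    exact hopen.inter isClosed_closure.isOpen_compl
  -- around each point of `D₀` there is a punctured ball inside `D \ D₀`
  have hball : ∀ z₀ ∈ D₀, ∃ r > 0, Metric.ball z₀ r ⊆ D ∧
      ∀ u ∈ Metric.ball z₀ r \ {z₀}, u ∈ D \ D₀ := by
    intro z₀ hz₀
    obtain ⟨U, hUopen, hzU, hUD⟩ := hdisc z₀ hz₀
    obtain ⟨r, hr, hrsub⟩ := Metric.isOpen_iff.1 (hopen.inter hUopen) z₀ ⟨hsub hz₀, hzU⟩
    refine ⟨r, hr, fun u hu => (hrsub hu).1, ?_⟩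
    rintro u ⟨hu, hu'⟩
    refine ⟨(hrsub hu).1, fun huD₀ => hu' ?_⟩
    have : u ∈ U ∩ D₀ := ⟨(hrsub hu).2, huD₀⟩
    rw [hUD] at this
    exact this
  -- the function is meromorphic at each point of `D₀`
  have hmero : ∀ z₀ ∈ D₀, MeromorphicAt f z₀ := by
    intro z₀ hz₀
    obtain ⟨r, hr, hrD, hrsub⟩ := hball z₀ hz₀
    set w₁ : ℂ := z₀ + ((r/2 : ℝ) : ℂ) with hw₁
    have hw₁mem : w₁ ∈ Metric.ball z₀ r \ {z₀} := by
      constructor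
      · simp only [hw₁, Metric.mem_ball, dist_eq_norm, add_sub_cancel_left, Complex.norm_real,
          Real.norm_eq_abs]
        rw [abs_of_pos (by linarith : (0:ℝ) < r/2)]
        linarith
      · simp only [Set.mem_singleton_iff, hw₁, add_eq_left]
        intro h
        have : (r/2 : ℝ) = 0 := by exact_mod_cast h
        linarith
    have hw₁Ω : w₁ ∈ D \ D₀ := hrsub w₁ hw₁mem
    obtain ⟨P, hP0, hPrel⟩ := hNash w₁ hw₁Ω
    have hcomp : Metric.ball z₀ r \ {z₀} ⊆ connectedComponentIn (D \ D₀) w₁ :=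
      (punctured_ball_preconnected z₀ r).subset_connectedComponentIn hw₁mem
        (fun u hu => hrsub u hu)
    refine mero_of_nash hr (hf.mono fun u hu => hrsub u hu) (toPoly2_ne_zero hP0) ?_
    intro u hu
    rw [toPoly2_eval]
    exact hPrel u (hcomp hu)
  -- the set of poles and the extension
  set S : Set ℂ := {z ∈ D₀ | Tendsto (fun w => ‖f w‖) (𝓝[≠] z) atTop} with hS
  set g : ℂ → ℂ := fun z => if z ∈ D₀ then limUnder (𝓝[≠] z) f else f z with hg
  have hgf : ∀ z ∈ D \ D₀, g z = f z := fun z hz => if_neg hz.2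
  -- `g` agrees with `f` on punctured neighbourhoods of points of `D₀`
  have hgf' : ∀ z₀ ∈ D₀, ∀ᶠ w in 𝓝[≠] z₀, g w = f w := by
    intro z₀ hz₀
    obtain ⟨r, hr, hrD, hrsub⟩ := hball z₀ hz₀
    filter_upwards [mem_nhdsWithin_of_mem_nhds (Metric.ball_mem_nhds z₀ hr),
      self_mem_nhdsWithin] with w hw hw'
    exact hgf w (hrsub w ⟨hw, hw'⟩)
  refine ⟨S, g, fun z hz => hz.1, ?_, ?_, hgf, ?_⟩
  · -- finiteness of poles in each connected component
    intro z hzD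
    set C : Set ℂ := connectedComponentIn D z with hC
    have hCopen : IsOpen C := hopen.connectedComponentIn
    have hCpre : IsPreconnected C := isPreconnected_connectedComponentIn
    have hCsubD : C ⊆ D := connectedComponentIn_subset _ _
    have hzC : z ∈ C := mem_connectedComponentIn hzD
    have hCdiff : IsPreconnected (C \ D₀) :=
      diff_discrete_preconnected hCopen hCpre (fun y hy hycl => hclosed y (hCsubD hy) hycl) hdisc
    -- find a point of `C \ D₀`
    obtain ⟨w₁, hw₁C, hw₁D₀⟩ : ∃ w₁, w₁ ∈ C ∧ w₁ ∉ D₀ := by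
      by_cases hzD₀ : z ∈ D₀
      · obtain ⟨r, hr, hrD, hrsub⟩ := hball z hzD₀
        have hballC : Metric.ball z r ⊆ C :=
          (convex_ball z r).isPreconnected.subset_connectedComponentIn
            (Metric.mem_ball_self hr) hrD
        refine ⟨z + ((r/2 : ℝ) : ℂ), hballC ?_, ?_⟩
        · simp only [Metric.mem_ball, dist_eq_norm, add_sub_cancel_left, Complex.norm_real,
            Real.norm_eq_abs]
          rw [abs_of_pos (by linarith : (0:ℝ) < r/2)]
          linarith
        · have hmem : z + ((r/2 : ℝ) : ℂ) ∈ Metric.ball z r \ {z} := by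
            constructor
            · simp only [Metric.mem_ball, dist_eq_norm, add_sub_cancel_left, Complex.norm_real,
                Real.norm_eq_abs]
              rw [abs_of_pos (by linarith : (0:ℝ) < r/2)]
              linarith
            · simp only [Set.mem_singleton_iff, add_eq_left]
              intro h
              have : (r/2 : ℝ) = 0 := by exact_mod_cast h
              linarith
          exact (hrsub _ hmem).2
      · exact ⟨z, hzC, hzD₀⟩
    have hw₁Ω : w₁ ∈ D \ D₀ := ⟨hCsubD hw₁C, hw₁D₀⟩
    obtain ⟨P, hP0, hPrel⟩ := hNash w₁ hw₁Ω
    set Q := toPoly2 P with hQdef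
    have hQ0 : Q ≠ 0 := toPoly2_ne_zero hP0
    set a : Polynomial ℂ := Q.coeff Q.natDegree with ha
    have ha0 : a ≠ 0 := Polynomial.leadingCoeff_ne_zero.2 hQ0
    have hCcomp : C \ D₀ ⊆ connectedComponentIn (D \ D₀) w₁ :=
      hCdiff.subset_connectedComponentIn ⟨hw₁C, hw₁D₀⟩
        (fun u hu => ⟨hCsubD hu.1, hu.2⟩)
    -- every pole in `C` is a root of the leading coefficient `a`
    have hSsub : S ∩ C ⊆ {w : ℂ | a.IsRoot w} := by
      rintro s ⟨hsS, hsC⟩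
      by_contra hroot
      have hsD₀ : s ∈ D₀ := hsS.1
      obtain ⟨U, hUopen, hsU, hUD⟩ := hdisc s hsD₀
      obtain ⟨r, hr, hrsub⟩ := Metric.isOpen_iff.1 (hCopen.inter hUopen) s ⟨hsC, hsU⟩
      have hpunct : Metric.ball s r \ {s} ⊆ C \ D₀ := by
        rintro u ⟨hu, hu'⟩
        refine ⟨(hrsub hu).1, fun huD₀ => hu' ?_⟩
        have : u ∈ U ∩ D₀ := ⟨(hrsub hu).2, huD₀⟩
        rw [hUD] at this
        exact this
      -- the algebraic bound on the punctured ball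
      set M : ℂ → ℝ := fun u => ∑ i ∈ Finset.range (Q.natDegree + 1), ‖(Q.coeff i).eval u‖
        with hM
      have hMcont : Continuous M := by
        apply continuous_finset_sum
        intro i _
        exact (Polynomial.continuous _).norm
      have hbound : ∀ u ∈ Metric.ball s r \ {s}, ‖a.eval u * f u‖ ≤ M u := by
        intro u hu
        apply root_bound
        rw [toPoly2_eval]
        exact hPrel u (hCcomp (hpunct hu))
      set ε : ℝ := ‖a.eval s‖ / 2 with hε
      have hεpos : 0 < ε := by
        have : a.eval s ≠ 0 := hroot
        have := norm_pos_iff.2 this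
        simp only [hε]
        linarith
      have hev1 : ∀ᶠ u in 𝓝 s, ε < ‖a.eval u‖ := by
        have hcont : Tendsto (fun u => ‖a.eval u‖) (𝓝 s) (𝓝 ‖a.eval s‖) :=
          ((Polynomial.continuous a).norm).continuousAt
        exact hcont.eventually (eventually_gt_nhds (by simp only [hε]; linarith))
      have hev2 : ∀ᶠ u in 𝓝 s, M u < M s + 1 :=
        hMcont.continuousAt.eventually (eventually_lt_nhds (lt_add_one _))
      have hev3 : ∀ᶠ u in 𝓝[≠] s, ‖f u‖ ≤ (M s + 1) / ε := by
        filter_upwards [mem_nhdsWithin_of_mem_nhds (Metric.ball_mem_nhds s hr),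
          mem_nhdsWithin_of_mem_nhds hev1, mem_nhdsWithin_of_mem_nhds hev2,
          self_mem_nhdsWithin] with u hu h1 h2 h3
        have hb := hbound u ⟨hu, h3⟩
        rw [norm_mul] at hb
        have h4 : ε * ‖f u‖ ≤ M s + 1 := by
          calc ε * ‖f u‖ ≤ ‖a.eval u‖ * ‖f u‖ :=
                mul_le_mul_of_nonneg_right (le_of_lt h1) (norm_nonneg _)
            _ ≤ M u := hb
            _ ≤ M s + 1 := le_of_lt h2
        rw [le_div_iff₀ hεpos, mul_comm]
        exact h4
      have hgt : ∀ᶠ u in 𝓝[≠] s, (M s + 1) / ε < ‖f u‖ :=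
        hsS.2.eventually_gt_atTop _
      obtain ⟨u, hu1, hu2⟩ := (hev3.and hgt).exists
      linarith
    exact (Polynomial.finite_setOf_isRoot ha0).subset hSsub
  · -- differentiability of `g` on `D \ S`
    rintro w ⟨hwD, hwS⟩
    by_cases hwD₀ : w ∈ D₀
    · -- removable singularity
      have hmw := hmero w hwD₀
      rcases mero_dichotomy hmw with ⟨c, hc⟩ | hatTop
      · obtain ⟨r, hr, hrD, hrsub⟩ := hball w hwD₀
        have hbdd : ∀ᶠ u in 𝓝[≠] w, ‖f u‖ ≤ ‖c‖ + 1 :=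
          hc.norm.eventually (eventually_le_nhds (lt_add_one _))
        obtain ⟨r', hr', hr'sub⟩ := Metric.eventually_nhds_iff.1 ((eventually_nhdsWithin_iff).1 hbdd)
        set ρ : ℝ := min r r' with hρ
        have hρpos : 0 < ρ := lt_min hr hr'
        have hρr : Metric.ball w ρ ⊆ Metric.ball w r := Metric.ball_subset_ball (min_le_left _ _)
        have hfd : DifferentiableOn ℂ f (Metric.ball w ρ \ {w}) :=
          hf.mono fun u hu => hrsub u ⟨hρr hu.1, hu.2⟩
        have hfb : BddAbove (norm ∘ f '' (Metric.ball w ρ \ {w})) := by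
          refine ⟨‖c‖ + 1, ?_⟩
          rintro x ⟨u, hu, rfl⟩
          exact hr'sub (lt_of_lt_of_le (Metric.mem_ball.1 hu.1) (min_le_right _ _)) hu.2
        have hup := Complex.differentiableOn_update_limUnder_of_bddAbove
          (Metric.ball_mem_nhds w hρpos) hfd hfb
        have hdiff : DifferentiableAt ℂ (Function.update f w (limUnder (𝓝[≠] w) f)) w :=
          hup.differentiableAt (Metric.ball_mem_nhds w hρpos)
        have heq : g =ᶠ[𝓝 w] Function.update f w (limUnder (𝓝[≠] w) f) := by
          filter_upwards [Metric.ball_mem_nhds w hρpos] with u hu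
          by_cases huw : u = w
          · subst huw
            simp only [hg, if_pos hwD₀, Function.update_self]
          · rw [Function.update_of_ne huw]
            exact hgf u (hrsub u ⟨hρr hu, huw⟩)
        exact (heq.differentiableAt_iff.2 hdiff).differentiableWithinAt
      · exact absurd ⟨hwD₀, hatTop⟩ hwS
    · -- away from `D₀`, `g` agrees with `f` near `w`
      have hdiff : DifferentiableAt ℂ f w := hf.differentiableAt (hΩopen.mem_nhds ⟨hwD, hwD₀⟩)
      have heq : g =ᶠ[𝓝 w] f := by
        filter_upwards [hΩopen.mem_nhds ⟨hwD, hwD₀⟩] with u hu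
        exact hgf u hu
      exact (heq.differentiableAt_iff.2 hdiff).differentiableWithinAt
  · -- poles
    intro z₀ hz₀
    have hT : Tendsto (fun u => ‖f u‖) (𝓝[≠] z₀) atTop := hz₀.2
    apply hT.congr'
    filter_upwards [hgf' z₀ hz₀.1] with u hu
    rw [hu]
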